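/- arXiv:2110.15458 — 2 statements merged into one kernel-verified Lean document; each statement's English description precedes it below -/
import Mathlib

section
/- Let φ : X → ℝ^d, λ > 0, and for n points define V_n = λ²I_d + Σᵢφ(xᵢ)φ(xᵢ)ᵀ and σ_{i−1}²(xᵢ) = λ²φ(xᵢ)ᵀV_{i−1}⁻¹φ(xᵢ). Then Σᵢ₌₁ⁿ log(1 + σ_{i−1}²(xᵢ)/λ²) = log det(V_n/λ²). -/
open Matrix Finset

private lemma outer_psd {d : ℕ} (v : Fin d → ℝ) :
    (Matrix.vecMulVec v v).PosSemidef := by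
  refine Matrix.PosSemidef.of_dotProduct_mulVec_nonneg ?_ ?_
  · ext i j
    simp [Matrix.vecMulVec_apply, Matrix.conjTranspose_apply, mul_comm]
  · intro y
    have h : (Matrix.vecMulVec v v) *ᵥ y = (v ⬝ᵥ y) • v := by
      ext i
      simp only [Matrix.mulVec, Matrix.vecMulVec_apply, dotProduct, Pi.smul_apply,
        smul_eq_mul, Finset.sum_mul]
      exact Finset.sum_congr rfl fun j _ => by ring
    rw [h]
    simp only [star_trivial, dotProduct_smul, smul_eq_mul]
    rw [dotProduct_comm]
    exact mul_self_nonneg _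

private lemma V_posDef {X : Type*} {d : ℕ} (φ : X → (Fin d → ℝ)) (lam : ℝ) (hlam : 0 < lam)
    (x : ℕ → X) (n : ℕ) :
    (((lam ^ 2) • (1 : Matrix (Fin d) (Fin d) ℝ) +
      ∑ j ∈ Finset.range n, Matrix.vecMulVec (φ (x j)) (φ (x j)))).PosDef := by
  apply Matrix.PosDef.add_posSemidef
  · rw [Matrix.smul_one_eq_diagonal]
    exact Matrix.posDef_diagonal_iff.mpr fun _ => by positivity
  · induction n with
    | zero => simpa using Matrix.PosSemidef.zero
    | succ n ih =>
      rw [Finset.sum_range_succ]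
      exact ih.add (outer_psd _)

theorem elliptical_potential_identity
    {X : Type*} {d : ℕ} (φ : X → (Fin d → ℝ)) (lam : ℝ) (hlam : 0 < lam)
    (x : ℕ → X) (n : ℕ) :
    (∑ i ∈ Finset.range n,
      Real.log (1 + (lam ^ 2 * (φ (x i) ⬝ᵥ
        ((lam ^ 2) • (1 : Matrix (Fin d) (Fin d) ℝ) +
          ∑ j ∈ Finset.range i, Matrix.vecMulVec (φ (x j)) (φ (x j)))⁻¹ *ᵥ φ (x i))) / lam ^ 2)) =
    Real.log (((lam ^ 2)⁻¹ • ((lam ^ 2) • (1 : Matrix (Fin d) (Fin d) ℝ) +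
        ∑ j ∈ Finset.range n, Matrix.vecMulVec (φ (x j)) (φ (x j)))).det) := by
  have hlam2 : (lam : ℝ) ^ 2 ≠ 0 := by positivity
  set V : ℕ → Matrix (Fin d) (Fin d) ℝ := fun k =>
    (lam ^ 2) • (1 : Matrix (Fin d) (Fin d) ℝ) +
      ∑ j ∈ Finset.range k, Matrix.vecMulVec (φ (x j)) (φ (x j)) with hV
  have hpd : ∀ k, (V k).PosDef := fun k => V_posDef φ lam hlam x k
  have hq : ∀ i, 0 ≤ φ (x i) ⬝ᵥ (V i)⁻¹ *ᵥ φ (x i) := by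
    intro i
    have := ((hpd i).inv).posSemidef.dotProduct_mulVec_nonneg (φ (x i))
    simpa using this
  have hdet : ∀ i, (V (i + 1)).det = (V i).det * (1 + φ (x i) ⬝ᵥ (V i)⁻¹ *ᵥ φ (x i)) := by
    intro i
    have hstep : V (i + 1) = V i + Matrix.replicateCol Unit (φ (x i)) * Matrix.replicateRow Unit (φ (x i)) := by
      rw [hV]
      simp only [Finset.sum_range_succ, ← Matrix.vecMulVec_eq Unit]
      exact (add_assoc _ _ _).symm
    rw [hstep, Matrix.det_add_replicateCol_mul_replicateRow (hpd i).det_pos.ne'.isUnit]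
    congr 1
    rw [Matrix.det_unique, Matrix.add_apply, Matrix.one_apply_eq, Matrix.mul_assoc,
      ← Matrix.replicateCol_mulVec, Matrix.replicateRow_mul_replicateCol_apply]
  have key : ∀ m, (∑ i ∈ Finset.range m,
      Real.log (1 + φ (x i) ⬝ᵥ (V i)⁻¹ *ᵥ φ (x i))) =
      Real.log (((lam ^ 2)⁻¹ • V m).det) := by
    intro m
    induction m with
    | zero =>
      simp [hV, smul_smul, inv_mul_cancel₀ hlam2]
    | succ k ihk =>
      rw [Finset.sum_range_succ, ihk, Matrix.det_smul, Matrix.det_smul, hdet k]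
      have h1 : (0:ℝ) < ((lam ^ 2)⁻¹) ^ (Fintype.card (Fin d)) * (V k).det :=
        mul_pos (pow_pos (by positivity) _) (hpd k).det_pos
      have h2 : (0:ℝ) < 1 + φ (x k) ⬝ᵥ (V k)⁻¹ *ᵥ φ (x k) := by linarith [hq k]
      rw [← mul_assoc, Real.log_mul h1.ne' h2.ne']
  have := key n
  simp_rw [mul_div_cancel_left₀ _ hlam2]
  exact this
end

section
/- Offline fixed-design confidence interval (finite-dimensional version): let φ : X → ℝ^d, f(x) = wᵀφ(x) with ‖w‖₂ ≤ B, fixed points x₁,…,x_n, observations yᵢ = f(xᵢ) + εᵢ with independent R-sub-Gaussian εᵢ, λ > 0, V_n = λ²I + Σφ(xᵢ)φ(xᵢ)ᵀ, μ_n(x) = φ(x)ᵀV_n⁻¹Σᵢφ(xᵢ)yᵢ, σ_n²(x) = λ²φ(x)ᵀV_n⁻¹φ(x). Then for each fixed x and δ ∈ (0,1), with probability at least 1 − δ, |f(x) − μ_n(x)| ≤ (B + (R/λ)√(2log(2/δ)))·σ_n(x). -/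
open MeasureTheory Matrix Finset Real ProbabilityTheory

section helpers

variable {d : ℕ}

private lemma sum_mulVec'' {ι : Type*} (s : Finset ι) (M : ι → Matrix (Fin d) (Fin d) ℝ)
    (z : Fin d → ℝ) : (∑ i ∈ s, M i) *ᵥ z = ∑ i ∈ s, M i *ᵥ z := by
  induction s using Finset.cons_induction with
  | empty => simp
  | cons i s hi ih => simp [Matrix.add_mulVec, ih, Finset.sum_cons]

private lemma vecMulVec_mulVec' (u v xx : Fin d → ℝ) :
    (vecMulVec u v) *ᵥ xx = (v ⬝ᵥ xx) • u := by
  ext i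
  simp only [vecMulVec, mulVec, dotProduct, Matrix.of_apply, Pi.smul_apply, smul_eq_mul,
    Finset.sum_mul]
  exact Finset.sum_congr rfl fun j _ => by ring

private lemma abs_dot_le (a b : Fin d → ℝ) :
    |a ⬝ᵥ b| ≤ Real.sqrt (∑ j, a j ^ 2) * Real.sqrt (∑ j, b j ^ 2) := by
  rw [← Real.sqrt_mul (by positivity), ← Real.sqrt_sq_eq_abs]
  exact Real.sqrt_le_sqrt (Finset.sum_mul_sq_le_sq_mul_sq _ _ _)

end helpers

private lemma dot_sum' {d : ℕ} {ι : Type*} (v : Fin d → ℝ) (s : Finset ι) (f : ι → Fin d → ℝ) :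
    v ⬝ᵥ (∑ i ∈ s, f i) = ∑ i ∈ s, v ⬝ᵥ f i := by
  simp only [dotProduct, Finset.sum_apply, Finset.mul_sum]
  exact Finset.sum_comm

private lemma chernoff {Ω : Type*} [MeasurableSpace Ω] (μ : Measure Ω) [IsProbabilityMeasure μ]
    {n : ℕ} (ε : Fin n → Ω → ℝ) (hmeas : ∀ i, Measurable (ε i))
    (hindep : ProbabilityTheory.iIndepFun ε μ)
    (R : ℝ) (hR : 0 < R)
    (hint : ∀ i, ∀ η : ℝ, Integrable (fun ω => Real.exp (η * ε i ω)) μ)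
    (hsub : ∀ i, ∀ η : ℝ, ∫ ω, Real.exp (η * ε i ω) ∂μ ≤ Real.exp (η ^ 2 * R ^ 2 / 2))
    (c : Fin n → ℝ) (u : ℝ) (hu : 0 < u) (hK : 0 < ∑ i, c i ^ 2) :
    (μ {ω | u ≤ |∑ i, c i * ε i ω|}).toReal ≤
      2 * Real.exp (-u ^ 2 / (2 * R ^ 2 * ∑ i, c i ^ 2)) := by
  set K2 : ℝ := ∑ i, c i ^ 2 with hK2
  set Y : Fin n → Ω → ℝ := fun i ω => c i * ε i ω with hY
  have hYmeas : ∀ i, Measurable (Y i) := fun i => (hmeas i).const_mul _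
  have hYindep : ProbabilityTheory.iIndepFun Y μ :=
    hindep.comp (fun i r => c i * r) (fun i => measurable_const_mul _)
  have hYint : ∀ (t : ℝ) (i : Fin n), Integrable (fun ω => Real.exp (t * Y i ω)) μ := by
    intro t i
    have := hint i (t * c i)
    simpa [hY, mul_assoc] using this
  have hmgf : ∀ t : ℝ, mgf (∑ i, Y i) μ t ≤ Real.exp (t ^ 2 * R ^ 2 * K2 / 2) := by
    intro t
    rw [hYindep.mgf_sum hYmeas Finset.univ]
    calc ∏ i, mgf (Y i) μ t ≤ ∏ i : Fin n, Real.exp ((t * c i) ^ 2 * R ^ 2 / 2) := by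
          refine Finset.prod_le_prod (fun i _ => mgf_nonneg) (fun i _ => ?_)
          have := hsub i (t * c i)
          unfold ProbabilityTheory.mgf
          simpa [hY, mul_assoc] using this
      _ = Real.exp (∑ i, (t * c i) ^ 2 * R ^ 2 / 2) := (Real.exp_sum _ _).symm
      _ = Real.exp (t ^ 2 * R ^ 2 * K2 / 2) := by
          congr 1
          rw [hK2, Finset.mul_sum, Finset.sum_div]
          exact Finset.sum_congr rfl fun i _ => by ring
  have hD : (0:ℝ) < R ^ 2 * K2 := by positivity
  set t : ℝ := u / (R ^ 2 * K2) with ht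
  have ht0 : 0 ≤ t := le_of_lt (by positivity)
  have hintS : ∀ s : ℝ, Integrable (fun ω => Real.exp (s * (∑ i, Y i) ω)) μ := fun s =>
    hYindep.integrable_exp_mul_sum hYmeas (fun i _ => hYint s i)
  have hexp : Real.exp (-t * u) * Real.exp (t ^ 2 * R ^ 2 * K2 / 2) =
      Real.exp (-u ^ 2 / (2 * R ^ 2 * K2)) := by
    rw [← Real.exp_add]
    congr 1
    rw [ht]
    field_simp
    ring
  have hup : (μ {ω | u ≤ (∑ i, Y i) ω}).toReal ≤ Real.exp (-u ^ 2 / (2 * R ^ 2 * K2)) := by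
    refine (measure_ge_le_exp_mul_mgf u ht0 (hintS t)).trans ?_
    rw [← hexp]
    exact mul_le_mul_of_nonneg_left (hmgf t) (le_of_lt (Real.exp_pos _))
  have hdown : (μ {ω | (∑ i, Y i) ω ≤ -u}).toReal ≤ Real.exp (-u ^ 2 / (2 * R ^ 2 * K2)) := by
    refine (measure_le_le_exp_mul_mgf (-u) (neg_nonpos.mpr ht0) (hintS (-t))).trans ?_
    have : Real.exp (-(-t) * -u) = Real.exp (-t * u) := by ring_nf
    rw [this, ← hexp]
    refine mul_le_mul_of_nonneg_left ?_ (le_of_lt (Real.exp_pos _))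
    have := hmgf (-t)
    simpa [neg_pow] using this
  have hsubset : {ω | u ≤ |∑ i, c i * ε i ω|} ⊆
      {ω | u ≤ (∑ i, Y i) ω} ∪ {ω | (∑ i, Y i) ω ≤ -u} := by
    intro ω hω
    simp only [Set.mem_setOf_eq] at hω
    have hS : (∑ i, Y i) ω = ∑ i, c i * ε i ω := by simp [hY]
    rcases le_abs.mp hω with h | h
    · exact Or.inl (by simp only [Set.mem_setOf_eq, hS]; exact h)
    · exact Or.inr (by simp only [Set.mem_setOf_eq, hS]; linarith)
  have hμ : μ {ω | u ≤ |∑ i, c i * ε i ω|} ≤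
      μ {ω | u ≤ (∑ i, Y i) ω} + μ {ω | (∑ i, Y i) ω ≤ -u} :=
    (measure_mono hsubset).trans (measure_union_le _ _)
  have h2 : (μ {ω | u ≤ |∑ i, c i * ε i ω|}).toReal ≤
      (μ {ω | u ≤ (∑ i, Y i) ω}).toReal + (μ {ω | (∑ i, Y i) ω ≤ -u}).toReal := by
    rw [← ENNReal.toReal_add (measure_ne_top μ _) (measure_ne_top μ _)]
    exact ENNReal.toReal_mono (ENNReal.add_ne_top.mpr ⟨measure_ne_top μ _, measure_ne_top μ _⟩) hμ
  linarith

theorem offline_confidence_interval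
    {Ω : Type*} [MeasurableSpace Ω] (μ : Measure Ω) [IsProbabilityMeasure μ]
    {X : Type*} {d n : ℕ} (φ : X → (Fin d → ℝ))
    (w : Fin d → ℝ) (B : ℝ) (hw : Real.sqrt (∑ j, (w j) ^ 2) ≤ B)
    (x : Fin n → X)
    (ε : Fin n → Ω → ℝ) (hmeas : ∀ i, Measurable (ε i))
    (hindep : ProbabilityTheory.iIndepFun ε μ)
    (R : ℝ) (hR : 0 < R)
    (hint : ∀ i, ∀ η : ℝ, Integrable (fun ω => Real.exp (η * ε i ω)) μ)
    (hsub : ∀ i, ∀ η : ℝ, ∫ ω, Real.exp (η * ε i ω) ∂μ ≤ Real.exp (η ^ 2 * R ^ 2 / 2))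
    (lam : ℝ) (hlam : 0 < lam) (x0 : X) (δ : ℝ) (hδ : δ ∈ Set.Ioo (0 : ℝ) 1) :
    ENNReal.ofReal (1 - δ) ≤
      μ {ω |
        |w ⬝ᵥ φ x0 -
          φ x0 ⬝ᵥ ((lam ^ 2) • (1 : Matrix (Fin d) (Fin d) ℝ) +
              ∑ i, Matrix.vecMulVec (φ (x i)) (φ (x i)))⁻¹ *ᵥ
            (∑ i, (w ⬝ᵥ φ (x i) + ε i ω) • φ (x i))| ≤
        (B + (R / lam) * Real.sqrt (2 * Real.log (2 / δ))) *
          Real.sqrt (lam ^ 2 *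
            (φ x0 ⬝ᵥ ((lam ^ 2) • (1 : Matrix (Fin d) (Fin d) ℝ) +
                ∑ i, Matrix.vecMulVec (φ (x i)) (φ (x i)))⁻¹ *ᵥ φ x0))} := by
  obtain ⟨hδ0, hδ1⟩ := hδ
  set Φ : Fin n → Fin d → ℝ := fun i => φ (x i) with hΦ
  set p : Fin d → ℝ := φ x0 with hp
  set V : Matrix (Fin d) (Fin d) ℝ :=
    (lam ^ 2) • (1 : Matrix (Fin d) (Fin d) ℝ) + ∑ i, vecMulVec (Φ i) (Φ i) with hVdef
  have hquad : ∀ z : Fin d → ℝ, V *ᵥ z = (lam ^ 2) • z + ∑ i, (Φ i ⬝ᵥ z) • Φ i := by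
    intro z
    rw [hVdef, Matrix.add_mulVec, Matrix.smul_mulVec, Matrix.one_mulVec, sum_mulVec'']
    congr 1
    exact Finset.sum_congr rfl fun i _ => vecMulVec_mulVec' _ _ _
  have hquadform : ∀ z : Fin d → ℝ, z ⬝ᵥ (V *ᵥ z) = lam ^ 2 * (z ⬝ᵥ z) + ∑ i, (Φ i ⬝ᵥ z) ^ 2 := by
    intro z
    rw [hquad, dotProduct_add, dotProduct_smul, dot_sum']
    congr 1
    exact Finset.sum_congr rfl fun i _ => by
      rw [dotProduct_smul, smul_eq_mul, dotProduct_comm z (Φ i)]; ring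
  have hVpd : V.PosDef := by
    refine posDef_iff_dotProduct_mulVec.mpr ⟨?_, ?_⟩
    · show Vᴴ = V
      rw [Matrix.conjTranspose_eq_transpose_of_trivial, hVdef, Matrix.transpose_add,
        Matrix.transpose_smul, Matrix.transpose_one]
      congr 1
      rw [Matrix.transpose_sum]
      exact Finset.sum_congr rfl fun i _ => by
        ext j k; simp [Matrix.transpose_apply, Matrix.vecMulVec_apply, mul_comm]
    · intro z hz
      have hzz : 0 < z ⬝ᵥ z := by
        obtain ⟨j, hj⟩ := Function.ne_iff.mp hz
        exact Finset.sum_pos' (fun i _ => mul_self_nonneg _)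
          ⟨j, Finset.mem_univ j, mul_self_pos.mpr hj⟩
      have hstar : star z = z := by simp
      rw [hstar, hquadform]
      have h1 : 0 ≤ ∑ i, (Φ i ⬝ᵥ z) ^ 2 := Finset.sum_nonneg fun i _ => sq_nonneg _
      nlinarith [pow_pos hlam 2]
  have hdet : IsUnit V.det := isUnit_iff_ne_zero.mpr hVpd.det_pos.ne'
  have hVmul : V * V⁻¹ = 1 := Matrix.mul_nonsing_inv _ hdet
  have hVsymm : Vᵀ = V := by
    rw [← Matrix.conjTranspose_eq_transpose_of_trivial]; exact hVpd.isHermitian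
  have hVinvsymm : (V⁻¹)ᵀ = V⁻¹ := by rw [Matrix.transpose_nonsing_inv, hVsymm]
  set a : Fin d → ℝ := V⁻¹ *ᵥ p with ha
  have hdotinv : ∀ z : Fin d → ℝ, p ⬝ᵥ (V⁻¹ *ᵥ z) = a ⬝ᵥ z := by
    intro z
    rw [Matrix.dotProduct_mulVec]
    congr 1
    rw [← Matrix.mulVec_transpose, hVinvsymm]
  have hVa : V *ᵥ a = p := by
    rw [ha, Matrix.mulVec_mulVec, hVmul, Matrix.one_mulVec]
  set c : Fin n → ℝ := fun i => Φ i ⬝ᵥ a with hc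
  have hpa : p ⬝ᵥ a = lam ^ 2 * (a ⬝ᵥ a) + ∑ i, c i ^ 2 := by
    have := hquadform a
    rw [hVa, dotProduct_comm] at this
    exact this
  have haa : (0:ℝ) ≤ a ⬝ᵥ a := by
    simpa [dotProduct, ← sq] using Finset.sum_nonneg (fun j (_ : j ∈ Finset.univ) => sq_nonneg (a j))
  have hcc : (0:ℝ) ≤ ∑ i, c i ^ 2 := Finset.sum_nonneg fun i _ => sq_nonneg _
  have hpa0 : (0:ℝ) ≤ p ⬝ᵥ a := by nlinarith
  have haa2 : a ⬝ᵥ a = ∑ j, a j ^ 2 := by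
    simp [dotProduct, sq]
  -- σ and its bounds
  set σ : ℝ := Real.sqrt (lam ^ 2 * (p ⬝ᵥ a)) with hσ
  have hσ0 : 0 ≤ σ := Real.sqrt_nonneg _
  have hB0 : 0 ≤ B := le_trans (Real.sqrt_nonneg _) hw
  set L : ℝ := Real.sqrt (2 * Real.log (2 / δ)) with hL
  have hlog : 0 < Real.log (2 / δ) := Real.log_pos (by rw [lt_div_iff₀ hδ0]; linarith)
  have hL0 : 0 < L := Real.sqrt_pos.mpr (by linarith)
  have hbias : lam ^ 2 * Real.sqrt (∑ j, a j ^ 2) ≤ σ := by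
    rw [hσ, show lam ^ 2 * Real.sqrt (∑ j, a j ^ 2) =
        Real.sqrt ((lam ^ 2) ^ 2 * ∑ j, a j ^ 2) by
      rw [Real.sqrt_mul (sq_nonneg _), Real.sqrt_sq (sq_nonneg lam)]]
    apply Real.sqrt_le_sqrt
    have h2 : 0 ≤ lam ^ 2 * ∑ i, c i ^ 2 := mul_nonneg (sq_nonneg _) hcc
    nlinarith [hpa, haa2]
  have hnoise : lam * Real.sqrt (∑ i, c i ^ 2) ≤ σ := by
    rw [hσ, show lam * Real.sqrt (∑ i, c i ^ 2) =
        Real.sqrt (lam ^ 2 * ∑ i, c i ^ 2) by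
      rw [Real.sqrt_mul (sq_nonneg _), Real.sqrt_sq hlam.le]]
    apply Real.sqrt_le_sqrt
    have h2 : 0 ≤ lam ^ 2 * (a ⬝ᵥ a) := mul_nonneg (sq_nonneg _) haa
    nlinarith [hpa]
  set S : Ω → ℝ := fun ω => ∑ i, c i * ε i ω with hS
  set u : ℝ := R * Real.sqrt (∑ i, c i ^ 2) * L with hu
  -- deterministic inclusion
  have hG : {ω | |S ω| ≤ u} ⊆ {ω |
      |w ⬝ᵥ p - p ⬝ᵥ V⁻¹ *ᵥ (∑ i, (w ⬝ᵥ Φ i + ε i ω) • Φ i)| ≤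
        (B + (R / lam) * L) * Real.sqrt (lam ^ 2 * (p ⬝ᵥ V⁻¹ *ᵥ p))} := by
    intro ω hω
    simp only [Set.mem_setOf_eq] at hω ⊢
    have e1 : a ⬝ᵥ (V *ᵥ w) = p ⬝ᵥ w := by
      rw [Matrix.dotProduct_mulVec, ← Matrix.mulVec_transpose, hVsymm, hVa]
    have e2 : a ⬝ᵥ (V *ᵥ w) = lam ^ 2 * (a ⬝ᵥ w) + ∑ i, (Φ i ⬝ᵥ w) * c i := by
      rw [hquad, dotProduct_add, dotProduct_smul, dot_sum', smul_eq_mul]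
      congr 1
      exact Finset.sum_congr rfl fun i _ => by
        rw [dotProduct_smul, smul_eq_mul, dotProduct_comm a (Φ i)]
    have e4 : ∑ i, (Φ i ⬝ᵥ w) * c i = p ⬝ᵥ w - lam ^ 2 * (a ⬝ᵥ w) := by linarith
    have hexpr : w ⬝ᵥ p - p ⬝ᵥ (V⁻¹ *ᵥ (∑ i, (w ⬝ᵥ Φ i + ε i ω) • Φ i)) =
        lam ^ 2 * (a ⬝ᵥ w) - S ω := by
      rw [hdotinv, dot_sum']
      have e3 : ∀ i : Fin n, a ⬝ᵥ ((w ⬝ᵥ Φ i + ε i ω) • Φ i) =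
          (Φ i ⬝ᵥ w) * c i + c i * ε i ω := fun i => by
        rw [dotProduct_smul, smul_eq_mul, dotProduct_comm a (Φ i), dotProduct_comm w (Φ i)]
        ring
      rw [Finset.sum_congr rfl fun i _ => e3 i, Finset.sum_add_distrib]
      have e5 : w ⬝ᵥ p = p ⬝ᵥ w := dotProduct_comm _ _
      have e6 : S ω = ∑ i, c i * ε i ω := rfl
      rw [e6]
      linarith
    have hσeq : Real.sqrt (lam ^ 2 * (p ⬝ᵥ V⁻¹ *ᵥ p)) = σ := by
      rw [hdotinv, dotProduct_comm a p, hσ]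
    rw [hexpr, hσeq]
    have t1 : lam ^ 2 * |a ⬝ᵥ w| ≤ σ * B := by
      calc lam ^ 2 * |a ⬝ᵥ w| ≤
          lam ^ 2 * (Real.sqrt (∑ j, a j ^ 2) * Real.sqrt (∑ j, w j ^ 2)) :=
            mul_le_mul_of_nonneg_left (abs_dot_le a w) (sq_nonneg lam)
        _ = (lam ^ 2 * Real.sqrt (∑ j, a j ^ 2)) * Real.sqrt (∑ j, w j ^ 2) := by ring
        _ ≤ σ * B := mul_le_mul hbias hw (Real.sqrt_nonneg _) hσ0
    have t2 : u ≤ R / lam * L * σ := by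
      have hueq : u = (R / lam * L) * (lam * Real.sqrt (∑ i, c i ^ 2)) := by
        rw [hu]; field_simp
      rw [hueq]
      exact mul_le_mul_of_nonneg_left hnoise
        (mul_nonneg (div_nonneg hR.le hlam.le) hL0.le)
    calc |lam ^ 2 * (a ⬝ᵥ w) - S ω| ≤ |lam ^ 2 * (a ⬝ᵥ w)| + |S ω| := abs_sub _ _
      _ = lam ^ 2 * |a ⬝ᵥ w| + |S ω| := by
          rw [abs_mul, abs_of_nonneg (sq_nonneg lam)]
      _ ≤ σ * B + u := add_le_add t1 hω
      _ ≤ σ * B + R / lam * L * σ := by linarith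
      _ = (B + R / lam * L) * σ := by ring
  -- probabilistic part
  refine le_trans ?_ (measure_mono hG)
  by_cases hKz : (∑ i, c i ^ 2) = 0
  · have hczero : ∀ i, c i = 0 := fun i =>
      pow_eq_zero_iff two_ne_zero |>.mp
        ((Finset.sum_eq_zero_iff_of_nonneg fun i _ => sq_nonneg (c i)).mp hKz i (Finset.mem_univ i))
    have huniv : {ω | |S ω| ≤ u} = Set.univ := by
      ext ω
      simp [hS, hczero, hu, hKz]
    rw [huniv, measure_univ]
    exact ENNReal.ofReal_le_one.mpr (by linarith)
  · have hKpos : 0 < ∑ i, c i ^ 2 := lt_of_le_of_ne hcc (Ne.symm hKz)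
    have hupos : 0 < u := mul_pos (mul_pos hR (Real.sqrt_pos.mpr hKpos)) hL0
    have htail := chernoff μ ε hmeas hindep R hR hint hsub c u hupos hKpos
    have hδeq : 2 * Real.exp (-u ^ 2 / (2 * R ^ 2 * ∑ i, c i ^ 2)) = δ := by
      have hu2 : u ^ 2 = R ^ 2 * (∑ i, c i ^ 2) * (2 * Real.log (2 / δ)) := by
        rw [hu, mul_pow, mul_pow, Real.sq_sqrt hcc, hL, Real.sq_sqrt (by linarith)]
      have hcomp : -u ^ 2 / (2 * R ^ 2 * ∑ i, c i ^ 2) = -Real.log (2 / δ) := by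
        rw [hu2]
        field_simp
      rw [hcomp, Real.exp_neg, Real.exp_log (by positivity)]
      field_simp
    have htail' : (μ {ω | u ≤ |S ω|}).toReal ≤ δ := by
      rw [← hδeq]
      exact htail
    have hSmeas : Measurable S := Finset.measurable_sum _ fun i _ => (hmeas i).const_mul _
    have hGmeas : MeasurableSet {ω | |S ω| ≤ u} := measurableSet_le hSmeas.abs measurable_const
    have hsubc : {ω | |S ω| ≤ u}ᶜ ⊆ {ω | u ≤ |S ω|} := fun ω hω =>
      le_of_lt (not_le.mp (by simpa using hω))
    have hμcompl : μ ({ω | |S ω| ≤ u}ᶜ) ≤ ENNReal.ofReal δ := by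
      rw [← ENNReal.ofReal_toReal (measure_ne_top μ ({ω | |S ω| ≤ u}ᶜ))]
      exact ENNReal.ofReal_le_ofReal
        ((ENNReal.toReal_mono (measure_ne_top μ _) (measure_mono hsubc)).trans htail')
    have h1 : μ {ω | |S ω| ≤ u} = 1 - μ ({ω | |S ω| ≤ u}ᶜ) := by
      have := prob_compl_eq_one_sub (μ := μ) hGmeas.compl
      rwa [compl_compl] at this
    calc ENNReal.ofReal (1 - δ) = 1 - ENNReal.ofReal δ := by
          rw [ENNReal.ofReal_sub _ hδ0.le, ENNReal.ofReal_one]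
      _ ≤ 1 - μ ({ω | |S ω| ≤ u}ᶜ) := tsub_le_tsub_left hμcompl 1
      _ = μ {ω | |S ω| ≤ u} := h1.symm
end
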